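/- Let p ≥ 2 and q satisfy 1/p + 1/q = 1. For any nonzero w ∈ ℝ^d, any γ ≥ 0, any x ∈ ℝ^d and y ∈ {±1}: there exists z with ‖z − x‖_p ≤ γ and sgn(⟨w, z⟩) ≠ y if and only if sgn(⟨w/‖w‖_q, x⟩ − yγ) ≠ y, where sgn(u) = 1 if u ≥ 0 and −1 otherwise. -/

import Mathlib

open Finset

/-- The `L_p` norm of a vector in `ℝ^d`. -/
noncomputable def lpNorm {d : ℕ} (p : ℝ) (v : Fin d → ℝ) : ℝ :=
  (∑ i, |v i| ^ p) ^ (1 / p)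

/-- `sgn u = 1` if `u ≥ 0` and `-1` otherwise. -/
noncomputable def sgn (u : ℝ) : ℝ := if 0 ≤ u then 1 else -1

lemma extremal_aux {d : ℕ} {p q : ℝ} (hp0 : 0 < p) (hq1 : 1 < q)
    (hq : (q - 1) * p = q)
    (w : Fin d → ℝ) (hw : w ≠ 0) (γ : ℝ) (hγ : 0 ≤ γ) :
    ∃ δ : Fin d → ℝ, lpNorm p δ ≤ γ ∧ ∑ i, w i * δ i = γ * lpNorm q w := by
  have hq0 : 0 < q := lt_trans one_pos hq1
  set Nq : ℝ := ∑ i, |w i| ^ q with hNqdef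
  have hNqpos : 0 < Nq := by
    obtain ⟨j, hj⟩ : ∃ j, w j ≠ 0 := by
      by_contra h; push_neg at h; exact hw (funext h)
    apply Finset.sum_pos' (fun i _ => Real.rpow_nonneg (abs_nonneg _) q)
    exact ⟨j, Finset.mem_univ j, Real.rpow_pos_of_pos (abs_pos.mpr hj) q⟩
  have hNval : lpNorm q w = Nq ^ (1 / q) := rfl
  set N : ℝ := Nq ^ (1 / q) with hNdef
  have hNpos : 0 < N := Real.rpow_pos_of_pos hNqpos _
  have hNq1 : N ^ (q - 1) = Nq ^ (1 - 1/q) := by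
    rw [hNdef, ← Real.rpow_mul hNqpos.le]
    congr 1
    field_simp
  have hNqq : N ^ q = Nq := by
    rw [hNdef, ← Real.rpow_mul hNqpos.le, one_div_mul_cancel (ne_of_gt hq0), Real.rpow_one]
  refine ⟨fun i => γ * Real.sign (w i) * |w i| ^ (q - 1) / N ^ (q - 1), ?_, ?_⟩
  · -- lpNorm p δ ≤ γ
    have hterm : ∀ i, |γ * Real.sign (w i) * |w i| ^ (q - 1) / N ^ (q - 1)| ^ p
        = γ ^ p * (|w i| ^ q / N ^ q) := by
      intro i
      rcases eq_or_ne (w i) 0 with h | h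
      · rw [h]
        simp [Real.sign_zero, Real.zero_rpow (by linarith : q - 1 ≠ 0),
          Real.zero_rpow (ne_of_gt hp0), Real.zero_rpow (ne_of_gt hq0)]
      · have hs : |Real.sign (w i)| = 1 := by
          rcases Real.sign_apply_eq_of_ne_zero _ h with h' | h' <;> rw [h'] <;> norm_num
        have habs : |γ * Real.sign (w i) * |w i| ^ (q - 1) / N ^ (q - 1)|
            = γ * |w i| ^ (q - 1) / N ^ (q - 1) := by
          rw [abs_div, abs_mul, abs_mul, hs, abs_of_nonneg hγ,
            abs_of_nonneg (Real.rpow_nonneg (abs_nonneg _) _),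
            abs_of_nonneg (Real.rpow_nonneg hNpos.le _)]
          ring
        rw [habs, Real.div_rpow (by positivity) (by positivity),
          Real.mul_rpow hγ (by positivity),
          ← Real.rpow_mul (abs_nonneg _), ← Real.rpow_mul hNpos.le, hq]
        ring_nf
    have hsum : (∑ i, |γ * Real.sign (w i) * |w i| ^ (q - 1) / N ^ (q - 1)| ^ p) = γ ^ p := by
      rw [Finset.sum_congr rfl (fun i _ => hterm i), ← Finset.mul_sum, ← Finset.sum_div,
        ← hNqdef, hNqq, div_self (ne_of_gt hNqpos), mul_one]
    show (∑ i, |γ * Real.sign (w i) * |w i| ^ (q - 1) / N ^ (q - 1)| ^ p) ^ (1/p) ≤ γ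
    rw [hsum, ← Real.rpow_mul hγ, mul_one_div, div_self (ne_of_gt hp0), Real.rpow_one]
  · -- sum equality
    have hterm : ∀ i, w i * (γ * Real.sign (w i) * |w i| ^ (q - 1) / N ^ (q - 1))
        = γ * (|w i| ^ q / N ^ (q - 1)) := by
      intro i
      rcases eq_or_ne (w i) 0 with h | h
      · rw [h]; simp [Real.zero_rpow (ne_of_gt hq0)]
      · have hws : w i * Real.sign (w i) = |w i| := by
          rcases lt_or_gt_of_ne h with h' | h'
          · rw [Real.sign_of_neg h', abs_of_neg h']; ring
          · rw [Real.sign_of_pos h', abs_of_pos h']; ring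
        have : |w i| * |w i| ^ (q - 1) = |w i| ^ q := by
          nth_rewrite 1 [← Real.rpow_one |w i|]
          rw [← Real.rpow_add (abs_pos.mpr h)]
          ring_nf
        calc w i * (γ * Real.sign (w i) * |w i| ^ (q - 1) / N ^ (q - 1))
            = γ * ((w i * Real.sign (w i)) * |w i| ^ (q - 1)) / N ^ (q - 1) := by ring
          _ = γ * (|w i| ^ q / N ^ (q - 1)) := by rw [hws, this]; ring
    rw [Finset.sum_congr rfl (fun i _ => hterm i), ← Finset.mul_sum, ← Finset.sum_div, ← hNqdef,
      hNval, hNq1]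
    congr 1
    rw [hNdef, div_eq_iff (by positivity), ← Real.rpow_add hNqpos]
    norm_num

lemma lpNorm_neg {d : ℕ} (p : ℝ) (v : Fin d → ℝ) : lpNorm p (-v) = lpNorm p v := by
  simp [lpNorm]

lemma holder_aux {d : ℕ} {p q : ℝ} (hq1 : 1 < q) (hpq : 1 / q + 1 / p = 1)
    (w v : Fin d → ℝ) : ∑ i, w i * v i ≤ lpNorm q w * lpNorm p v := by
  have hconj : Real.HolderConjugate q p := Real.holderConjugate_iff.mpr ⟨hq1, by simpa [one_div] using hpq⟩
  simpa [lpNorm] using Real.inner_le_Lp_mul_Lq (Finset.univ) w v hconj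

lemma holder_aux' {d : ℕ} {p q : ℝ} (hq1 : 1 < q) (hpq : 1 / q + 1 / p = 1)
    (w v : Fin d → ℝ) : -(lpNorm q w * lpNorm p v) ≤ ∑ i, w i * v i := by
  have h := holder_aux hq1 hpq w (-v)
  rw [lpNorm_neg] at h
  have h2 : ∑ i, w i * (-v) i = -∑ i, w i * v i := by
    simp [← Finset.sum_neg_distrib]
  rw [h2] at h
  linarith

lemma sgn_ne_one (u : ℝ) : sgn u ≠ 1 ↔ u < 0 := by
  unfold sgn; split_ifs with h <;> simp_all <;> linarith

lemma sgn_ne_neg_one (u : ℝ) : sgn u ≠ -1 ↔ 0 ≤ u := by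
  unfold sgn; split_ifs with h <;> simp_all <;> norm_num

/-- Pointwise equivalence between adversarially robust classification under
`L_p` perturbations of radius `γ` and margin-`γ` classification by the
`L_q`-normalized weight vector. -/
theorem stmt0 {d : ℕ} (p q : ℝ) (hp : 2 ≤ p) (hpq : 1 / p + 1 / q = 1)
    (w : Fin d → ℝ) (hw : w ≠ 0) (γ : ℝ) (hγ : 0 ≤ γ)
    (x : Fin d → ℝ) (y : ℝ) (hy : y = 1 ∨ y = -1) :
    (∃ z : Fin d → ℝ, lpNorm p (z - x) ≤ γ ∧ sgn (∑ i, w i * z i) ≠ y) ↔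
      sgn ((∑ i, (w i / lpNorm q w) * x i) - y * γ) ≠ y := by
  have hp0 : 0 < p := by linarith
  have h1p : 1 / p < 1 := by rw [div_lt_one hp0]; linarith
  have h1ppos : 0 < 1 / p := by positivity
  have h1q : 1 / q = 1 - 1 / p := by linarith
  have hq0 : 0 < q := by
    have : 0 < 1 / q := by rw [h1q]; linarith
    exact one_div_pos.mp this
  have hq1 : 1 < q := by
    have h : 1 / q < 1 := by rw [h1q]; linarith
    rw [div_lt_one hq0] at h; exact h
  have hqp : (q - 1) * p = q := by
    have hq' : 1 / q + 1 / p = 1 := by linarith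
    field_simp at hq' ⊢
    linarith
  have hpq' : 1 / q + 1 / p = 1 := by linarith
  -- positivity of the norm
  have hNpos : 0 < lpNorm q w := by
    apply Real.rpow_pos_of_pos
    obtain ⟨j, hj⟩ : ∃ j, w j ≠ 0 := by
      by_contra h; push_neg at h; exact hw (funext h)
    apply Finset.sum_pos' (fun i _ => Real.rpow_nonneg (abs_nonneg _) q)
    exact ⟨j, Finset.mem_univ j, Real.rpow_pos_of_pos (abs_pos.mpr hj) q⟩
  set N := lpNorm q w with hN
  set S := ∑ i, w i * x i with hS
  have hsum : ∑ i, (w i / N) * x i = S / N := by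
    rw [hS, Finset.sum_div]
    exact Finset.sum_congr rfl (fun i _ => by ring)
  rw [hsum]
  obtain ⟨δ, hδ1, hδ2⟩ := extremal_aux hp0 hq1 hqp w hw γ hγ
  rcases hy with rfl | rfl
  · -- y = 1
    rw [one_mul, sgn_ne_one, sub_neg]
    constructor
    · rintro ⟨z, hz, hsz⟩
      rw [sgn_ne_one] at hsz
      have hh := holder_aux' hq1 hpq' w (z - x)
      have hzx : ∑ i, w i * (z - x) i = (∑ i, w i * z i) - S := by
        rw [hS, ← Finset.sum_sub_distrib]
        exact Finset.sum_congr rfl (fun i _ => by simp [Pi.sub_apply]; ring)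
      rw [hzx] at hh
      have hb : N * lpNorm p (z - x) ≤ N * γ := by
        apply mul_le_mul_of_nonneg_left hz hNpos.le
      rw [div_lt_iff₀ hNpos]
      nlinarith
    · intro h
      rw [div_lt_iff₀ hNpos] at h
      refine ⟨x - δ, ?_, ?_⟩
      · have : (x - δ) - x = -δ := by ext i; simp
        rw [this, lpNorm_neg]; exact hδ1
      · rw [sgn_ne_one]
        have : ∑ i, w i * (x - δ) i = S - γ * N := by
          rw [hS, ← hδ2, ← Finset.sum_sub_distrib]
          exact Finset.sum_congr rfl (fun i _ => by simp [Pi.sub_apply]; ring)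
        rw [this]
        nlinarith
  · -- y = -1
    rw [sgn_ne_neg_one, neg_one_mul, sub_neg_eq_add]
    constructor
    · rintro ⟨z, hz, hsz⟩
      rw [sgn_ne_neg_one] at hsz
      have hh := holder_aux hq1 hpq' w (z - x)
      have hzx : ∑ i, w i * (z - x) i = (∑ i, w i * z i) - S := by
        rw [hS, ← Finset.sum_sub_distrib]
        exact Finset.sum_congr rfl (fun i _ => by simp [Pi.sub_apply]; ring)
      rw [hzx] at hh
      have hb : N * lpNorm p (z - x) ≤ N * γ := by
        apply mul_le_mul_of_nonneg_left hz hNpos.le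
      rw [← sub_nonneg, show S / N + γ - 0 = S / N + γ by ring]
      have : 0 ≤ S + γ * N := by nlinarith
      have := div_nonneg this hNpos.le
      rw [add_div] at this
      calc (0:ℝ) ≤ S / N + γ * N / N := this
        _ = S / N + γ := by rw [mul_div_assoc, div_self (ne_of_gt hNpos), mul_one]
    · intro h
      refine ⟨x + δ, ?_, ?_⟩
      · have : (x + δ) - x = δ := by ext i; simp
        rw [this]; exact hδ1
      · rw [sgn_ne_neg_one]
        have hzs : ∑ i, w i * (x + δ) i = S + γ * N := by
          rw [hS, ← hδ2, ← Finset.sum_add_distrib]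
          exact Finset.sum_congr rfl (fun i _ => by simp [Pi.add_apply]; ring)
        rw [hzs]
        have : 0 ≤ (S / N + γ) * N := mul_nonneg h hNpos.le
        calc (0:ℝ) ≤ (S / N + γ) * N := this
          _ = S + γ * N := by field_simp
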